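/- Let d1 = ⟨sh1, f1, l1⟩ and d2 = ⟨sh2, f2, l2⟩ in SFL be such that ρ_PSD(d1) ≠ ρ_PSD(d2). Then there exist a sequence of bindings bs ∈ Bind* (each binding x ↦ t with {x} ∪ vars(t) ⊆ VI) and an observable ρ ∈ {ρ_Con, ρ_PS, ρ_F, ρ_L} such that ρ(aunify_S(d1, bs)) ≠ ρ(aunify_S(d2, bs)), where aunify_S is taken relative to the rational-tree equality theory. Consequently ρ_PSD(SFL) is the minimal quotient of SFL preserving groundness, independence, freeness and linearity under abstract unification. -/

import Mathlib

open Classical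

noncomputable section

/-- Finite terms over a ranked signature `Sig` (with arity function `ar`)
and variables taken from `Vr`. -/
inductive HTerm (Sig : Type) (ar : Sig → ℕ) (Vr : Type) : Type where
  | var : Vr → HTerm Sig ar Vr
  | app : (f : Sig) → (Fin (ar f) → HTerm Sig ar Vr) → HTerm Sig ar Vr

namespace HTerm

variable {Sig : Type} {ar : Sig → ℕ} {Vr : Type}

/-- The set of variables occurring in a term. -/
def vars : HTerm Sig ar Vr → Set Vr
  | var x => {x}
  | app _ ts => ⋃ i, (ts i).vars

/-- The number of occurrences of the variable `z` in a term. -/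
def count (z : Vr) : HTerm Sig ar Vr → ℕ
  | var x => if x = z then 1 else 0
  | app _ ts => ∑ i, (ts i).count z

/-- Application of a (raw) substitution to a term. -/
def substApp (σ : Vr → HTerm Sig ar Vr) : HTerm Sig ar Vr → HTerm Sig ar Vr
  | var x => σ x
  | app f ts => app f (fun i => (ts i).substApp σ)

end HTerm

/-- The set `SG` of sharing groups over `VI`: nonempty subsets of `VI`. -/
def SG {Vr : Type} (VI : Set Vr) : Set (Set Vr) := {S | S ⊆ VI ∧ S ≠ ∅}

/-- An element of the abstract domain `SFL`: a set-sharing component together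
with a freeness and a linearity component. -/
structure SFLElem (Vr : Type) where
  sh : Set (Set Vr)
  f : Set Vr
  l : Set Vr

/-- Well-formedness of an `SFL` element: `sh ∈ SH = ℘(SG VI)`, `f ⊆ VI`, `l ⊆ VI`. -/
def SFLElem.WF {Vr : Type} (VI : Set Vr) (d : SFLElem Vr) : Prop :=
  d.sh ⊆ SG VI ∧ d.f ⊆ VI ∧ d.l ⊆ VI

/-- The bottom element `⊥_S = ⟨∅, VI, VI⟩` of `SFL`. -/
def botS {Vr : Type} (VI : Set Vr) : SFLElem Vr := ⟨∅, VI, VI⟩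

/-- The order of `SFL`: `⊆` on the sharing component, `⊇` on freeness and linearity. -/
def SFLElem.leS {Vr : Type} (d1 d2 : SFLElem Vr) : Prop :=
  d1.sh ⊆ d2.sh ∧ d2.f ⊆ d1.f ∧ d2.l ⊆ d1.l

/-- The least upper bound of `SFL`. -/
def SFLElem.lubS {Vr : Type} (d1 d2 : SFLElem Vr) : SFLElem Vr :=
  ⟨d1.sh ∪ d2.sh, d1.f ∩ d2.f, d1.l ∩ d2.l⟩

section SHOps

variable {Vr : Type}

/-- The relevant component of `sh` with respect to `V`. -/
def relSH (V : Set Vr) (sh : Set (Set Vr)) : Set (Set Vr) :=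
  {S | S ∈ sh ∧ S ∩ V ≠ ∅}

/-- The irrelevant component of `sh` with respect to `V`. -/
def nrelSH (V : Set Vr) (sh : Set (Set Vr)) : Set (Set Vr) := sh \ relSH V sh

/-- The binary union function on sharing sets. -/
def binSH (sh1 sh2 : Set (Set Vr)) : Set (Set Vr) :=
  {S | ∃ S1 ∈ sh1, ∃ S2 ∈ sh2, S = S1 ∪ S2}

/-- The star-union of a sharing set: all sharing groups that are unions of
finitely many (at least one) elements of `sh`. -/
def starSH (VI : Set Vr) (sh : Set (Set Vr)) : Set (Set Vr) :=
  {S | S ∈ SG VI ∧ ∃ F : Set (Set Vr), F.Finite ∧ F.Nonempty ∧ F ⊆ sh ∧ S = ⋃₀ F}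

/-- The redundancy-removing upper closure operator `ρ_PSD` on sharing sets. -/
def rhoPSDsh (VI : Set Vr) (sh : Set (Set Vr)) : Set (Set Vr) :=
  {S | S ∈ SG VI ∧ ∀ y ∈ S, S = ⋃₀ {U | U ∈ sh ∧ y ∈ U ∧ U ⊆ S}}

/-- `ρ_PSD` on `SFL`: it acts on the sharing component only. -/
def rhoPSD (VI : Set Vr) (d : SFLElem Vr) : SFLElem Vr :=
  ⟨rhoPSDsh VI d.sh, d.f, d.l⟩

end SHOps

/-- The `cyclic` operator, strengthening `sh` by coupling `x` with `t`. -/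
def cyclicSH {Sig : Type} {ar : Sig → ℕ} {Vr : Type} (x : Vr) (t : HTerm Sig ar Vr)
    (sh : Set (Set Vr)) : Set (Set Vr) :=
  nrelSH ({x} ∪ t.vars) sh ∪ relSH (t.vars \ {x}) sh

section Predicates

variable {Sig : Type} {ar : Sig → ℕ} {Vr : Type}

/-- `t` is ground in `d`. -/
def groundD (VI : Set Vr) (d : SFLElem Vr) (t : HTerm Sig ar Vr) : Prop :=
  t.vars ⊆ VI \ ⋃₀ d.sh

/-- `s` and `t` are independent in `d`. -/
def indD (d : SFLElem Vr) (s t : HTerm Sig ar Vr) : Prop :=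
  relSH s.vars d.sh ∩ relSH t.vars d.sh = ∅

/-- `t` is free in `d` (it is a variable belonging to the freeness component). -/
def freeD (d : SFLElem Vr) (t : HTerm Sig ar Vr) : Prop :=
  ∃ y ∈ d.f, t = HTerm.var y

/-- `y` occurs linearly in `t` in `d`. -/
def occlinD (VI : Set Vr) (d : SFLElem Vr) (y : Vr) (t : HTerm Sig ar Vr) : Prop :=
  groundD VI d (HTerm.var y : HTerm Sig ar Vr) ∨
    (t.count y = 1 ∧ y ∈ d.l ∧
      ∀ z ∈ t.vars, y ≠ z → indD d (HTerm.var y : HTerm Sig ar Vr) (HTerm.var z))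

/-- `t` is linear in `d`. -/
def linD (VI : Set Vr) (d : SFLElem Vr) (t : HTerm Sig ar Vr) : Prop :=
  ∀ y ∈ t.vars, occlinD VI d y t

/-- The set of variables of interest that may share with `t` in `d`. -/
def shareWith (d : SFLElem Vr) (t : HTerm Sig ar Vr) : Set Vr :=
  ⋃₀ relSH t.vars d.sh

end Predicates

section Amgu

variable {Sig : Type} {ar : Sig → ℕ} {Vr : Type}

/-- The core of the abstract mgu operator (the non-bottom case of `amgu_S`). -/
def amguCore (VI : Set Vr) (d : SFLElem Vr) (x : Vr) (t : HTerm Sig ar Vr) :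
    SFLElem Vr :=
  let sh := d.sh
  let shx := relSH {x} sh
  let sht := relSH t.vars sh
  let shxt := shx ∩ sht
  let shm := nrelSH ({x} ∪ t.vars) sh
  let sh'' : Set (Set Vr) :=
    if freeD d (HTerm.var x : HTerm Sig ar Vr) ∨ freeD d t then
      binSH shx sht
    else if linD VI d (HTerm.var x : HTerm Sig ar Vr) ∧ linD VI d t then
      binSH (shx ∪ binSH shx (starSH VI shxt)) (sht ∪ binSH sht (starSH VI shxt))
    else if linD VI d (HTerm.var x : HTerm Sig ar Vr) then
      binSH (starSH VI shx) sht
    else if linD VI d t then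
      binSH shx (starSH VI sht)
    else
      binSH (starSH VI shx) (starSH VI sht)
  let sh' := cyclicSH x t (shm ∪ sh'')
  let Sx := shareWith d (HTerm.var x : HTerm Sig ar Vr)
  let St := shareWith d t
  let f' : Set Vr :=
    if freeD d (HTerm.var x : HTerm Sig ar Vr) ∧ freeD d t then d.f
    else if freeD d (HTerm.var x : HTerm Sig ar Vr) then d.f \ Sx
    else if freeD d t then d.f \ St
    else d.f \ (Sx ∪ St)
  let l'' : Set Vr :=
    if linD VI d (HTerm.var x : HTerm Sig ar Vr) ∧ linD VI d t then d.l \ (Sx ∩ St)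
    else if linD VI d (HTerm.var x : HTerm Sig ar Vr) then d.l \ Sx
    else if linD VI d t then d.l \ St
    else d.l \ (Sx ∪ St)
  let l' := (VI \ ⋃₀ sh') ∪ f' ∪ l''
  ⟨sh', f', l'⟩

/-- The abstract mgu operator `amgu_S`, relative to the rational-tree equality
theory (no occurs-check bottom case). -/
def amguRT (VI : Set Vr) (d : SFLElem Vr) (x : Vr) (t : HTerm Sig ar Vr) :
    SFLElem Vr :=
  if d = botS VI then botS VI else amguCore VI d x t

/-- The abstract unification operator `aunify_S` (rational-tree case),
applying `amgu_S` along a sequence of bindings. -/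
def aunifyRT (VI : Set Vr) (d : SFLElem Vr) :
    List (Vr × HTerm Sig ar Vr) → SFLElem Vr
  | [] => d
  | b :: bs => aunifyRT VI (amguRT VI d b.1 b.2) bs

end Amgu

section Observables

variable {Vr : Type}

/-- The groundness observable `ρ_Con` on `SFL`. -/
def rhoCon (VI : Set Vr) (d : SFLElem Vr) : SFLElem Vr :=
  ⟨{S | S ∈ SG VI ∧ S ⊆ ⋃₀ d.sh}, ∅, ∅⟩

/-- The independence observable `ρ_PS` on `SFL`. -/
def rhoPS (VI : Set Vr) (d : SFLElem Vr) : SFLElem Vr :=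
  ⟨{S | S ∈ SG VI ∧ ∀ P : Set Vr, P ⊆ S → P.ncard = 2 → ∃ U ∈ d.sh, P ⊆ U}, ∅, ∅⟩

/-- The freeness observable `ρ_F` on `SFL`. -/
def rhoF (VI : Set Vr) (d : SFLElem Vr) : SFLElem Vr := ⟨SG VI, d.f, ∅⟩

/-- The linearity observable `ρ_L` on `SFL`. -/
def rhoL (VI : Set Vr) (d : SFLElem Vr) : SFLElem Vr := ⟨SG VI, ∅, d.l⟩

end Observables

namespace RhoPSDMin

variable {Sig : Type} {ar : Sig → ℕ} {Vr : Type}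

/-- A constant term built from a nullary function symbol. -/
def constT (a : Sig) (ha : ar a = 0) : HTerm Sig ar Vr :=
  HTerm.app a (fun i => absurd i.isLt (by omega))

lemma constT_vars (a : Sig) (ha : ar a = 0) :
    (constT (Vr := Vr) a ha).vars = ∅ := by
  haveI : IsEmpty (Fin (ar a)) := by rw [ha]; infer_instance
  simp [constT, HTerm.vars]

lemma relSH_empty (sh : Set (Set Vr)) : relSH ∅ sh = ∅ := by
  ext S; simp [relSH]

lemma binSH_empty_right (A : Set (Set Vr)) : binSH A ∅ = ∅ := by
  ext S; simp [binSH]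

lemma binSH_empty_left (A : Set (Set Vr)) : binSH ∅ A = ∅ := by
  ext S; simp [binSH]

lemma starSH_empty (VI : Set Vr) : starSH VI ∅ = ∅ := by
  ext S
  simp only [starSH, Set.mem_setOf_eq, Set.subset_empty_iff, Set.mem_empty_iff_false,
    iff_false, not_and]
  rintro _ ⟨F, _, hne, hF, _⟩
  rw [hF] at hne
  exact hne.ne_empty rfl

lemma nrelSH_singleton (z : Vr) (sh : Set (Set Vr)) :
    nrelSH {z} sh = {U ∈ sh | z ∉ U} := by
  ext U
  simp only [nrelSH, relSH, Set.mem_diff, Set.mem_setOf_eq, not_and, ne_eq, not_not,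
    Set.inter_singleton_eq_empty]
  constructor
  · rintro ⟨hU, h⟩; exact ⟨hU, h hU⟩
  · rintro ⟨hU, h⟩; exact ⟨hU, fun _ => h⟩

/-- The abstract effect of grounding `z` by a constant: all groups containing `z`
are removed from the sharing component. -/
lemma amguCore_const_sh (VI : Set Vr) (d : SFLElem Vr) (z : Vr) (a : Sig) (ha : ar a = 0) :
    (amguCore VI d z (constT a ha)).sh = {U ∈ d.sh | z ∉ U} := by
  have hv : (constT (Vr := Vr) a ha).vars = ∅ := constT_vars a ha
  simp only [amguCore, hv, relSH_empty, binSH_empty_right, binSH_empty_left,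
    Set.inter_empty, starSH_empty, Set.union_empty, Set.empty_union, ite_self,
    cyclicSH, Set.empty_diff, Set.diff_empty]
  simp only [nrelSH_singleton]
  ext U
  simp only [Set.mem_setOf_eq]
  tauto

lemma amguRT_const_sh (VI : Set Vr) (d : SFLElem Vr) (z : Vr) (a : Sig) (ha : ar a = 0) :
    (amguRT VI d z (constT a ha)).sh = {U ∈ d.sh | z ∉ U} := by
  by_cases h : d = botS VI
  · subst h; simp [amguRT, botS]
  · simp [amguRT, h, amguCore_const_sh]

/-- Iterated grounding of a list of variables. -/
lemma aunify_ground_sh (VI : Set Vr) (a : Sig) (ha : ar a = 0) (zs : List Vr)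
    (d : SFLElem Vr) :
    (aunifyRT VI d (zs.map fun z => (z, constT (Sig := Sig) (ar := ar) a ha))).sh
      = {U ∈ d.sh | ∀ z ∈ zs, z ∉ U} := by
  induction zs generalizing d with
  | nil => simp [aunifyRT]
  | cons z zs ih =>
      simp only [List.map_cons, aunifyRT, ih, amguRT_const_sh]
      ext U
      simp only [Set.mem_setOf_eq, List.mem_cons]
      constructor
      · rintro ⟨⟨hU, hz⟩, h⟩
        exact ⟨hU, fun w hw => hw.elim (fun e => e ▸ hz) (h w)⟩
      · rintro ⟨hU, h⟩
        exact ⟨⟨hU, h z (Or.inl rfl)⟩, fun w hw => h w (Or.inr hw)⟩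

/-- Core of the minimality argument: a sharing group in the ρ_PSD closure of `d1.sh`
but not of `d2.sh` can be exposed by grounding everything outside it and then
observing either groundness or pair-sharing. -/
lemma core (a : Sig) (ha : ar a = 0) (VI : Set Vr) (hVI : VI.Finite)
    (d1 d2 : SFLElem Vr) (h1 : d1.WF VI) (h2 : d2.WF VI)
    (S : Set Vr) (hS1 : S ∈ rhoPSDsh VI d1.sh) (hS2 : S ∉ rhoPSDsh VI d2.sh) :
    ∃ bs : List (Vr × HTerm Sig ar Vr),
      (∀ b ∈ bs, insert b.1 b.2.vars ⊆ VI ∧ b.2 ≠ HTerm.var b.1) ∧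
      ∃ ρ ∈ ({rhoCon VI, rhoPS VI, rhoF VI, rhoL VI} :
          Set (SFLElem Vr → SFLElem Vr)),
        ρ (aunifyRT VI d1 bs) ≠ ρ (aunifyRT VI d2 bs) := by
  obtain ⟨hSG, hcov⟩ := hS1
  obtain ⟨hSVI, hSne⟩ := hSG
  have hnc : ¬ ∀ y ∈ S, S = ⋃₀ {U | U ∈ d2.sh ∧ y ∈ U ∧ U ⊆ S} :=
    fun h => hS2 ⟨⟨hSVI, hSne⟩, h⟩
  push_neg at hnc
  obtain ⟨y0, hy0S, hy0⟩ := hnc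
  have hWS : ⋃₀ {U | U ∈ d2.sh ∧ y0 ∈ U ∧ U ⊆ S} ⊆ S :=
    Set.sUnion_subset fun U hU => hU.2.2
  obtain ⟨z, hzS, hzW⟩ := Set.exists_of_ssubset (hWS.ssubset_of_ne (Ne.symm hy0))
  -- the grounding bindings
  have hD : (VI \ S).Finite := hVI.diff
  set zs : List Vr := hD.toFinset.toList with hzs
  have hmem : ∀ w, w ∈ zs ↔ w ∈ VI \ S := by
    intro w; rw [hzs, Finset.mem_toList, Set.Finite.mem_toFinset]
  refine ⟨zs.map fun w => (w, constT (Sig := Sig) (ar := ar) a ha), ?_, ?_⟩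
  · rintro b hb
    simp only [List.mem_map] at hb
    obtain ⟨w, hw, rfl⟩ := hb
    refine ⟨?_, by simp [constT]⟩
    rw [constT_vars]
    simpa using ((hmem w).1 hw).1
  · -- the sharing components after grounding
    have key : ∀ d : SFLElem Vr, d.WF VI →
        (aunifyRT VI d (zs.map fun w => (w, constT (Sig := Sig) (ar := ar) a ha))).sh
          = {U ∈ d.sh | U ⊆ S} := by
      intro d hd
      rw [aunify_ground_sh]
      ext U
      simp only [Set.mem_setOf_eq]
      constructor
      · rintro ⟨hU, h⟩
        refine ⟨hU, fun x hx => ?_⟩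
        by_contra hxS
        exact h x ((hmem x).2 ⟨(hd.1 hU).1 hx, hxS⟩) hx
      · rintro ⟨hU, h⟩
        exact ⟨hU, fun w hw hwU => ((hmem w).1 hw).2 (h hwU)⟩
    by_cases hz2 : ∃ U, U ∈ d2.sh ∧ z ∈ U ∧ U ⊆ S
    · -- pair-sharing distinguishes {y0, z}
      obtain ⟨Uz, hUz2, hzUz, hUzS⟩ := hz2
      have hy0z : y0 ≠ z := by
        rintro rfl
        exact hzW ⟨Uz, ⟨hUz2, hzUz, hUzS⟩, hzUz⟩
      have hpair2 : ¬ ∃ U, U ∈ d2.sh ∧ y0 ∈ U ∧ z ∈ U ∧ U ⊆ S := by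
        rintro ⟨U, hU, hy0U, hzU, hUS⟩
        exact hzW ⟨U, ⟨hU, hy0U, hUS⟩, hzU⟩
      have hpair1 : ∃ U, U ∈ d1.sh ∧ y0 ∈ U ∧ z ∈ U ∧ U ⊆ S := by
        have hz' : z ∈ ⋃₀ {U | U ∈ d1.sh ∧ y0 ∈ U ∧ U ⊆ S} := (hcov y0 hy0S) ▸ hzS
        obtain ⟨U, hU, hzU⟩ := hz'
        exact ⟨U, hU.1, hU.2.1, hzU, hU.2.2⟩
      obtain ⟨U1, hU1, hy0U1, hzU1, hU1S⟩ := hpair1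
      refine ⟨rhoPS VI, by simp, ?_⟩
      have m1 : ({y0, z} : Set Vr) ∈
          (rhoPS VI (aunifyRT VI d1 (zs.map fun w =>
            (w, constT (Sig := Sig) (ar := ar) a ha)))).sh := by
        simp only [rhoPS, Set.mem_setOf_eq]
        refine ⟨⟨?_, (Set.insert_nonempty _ _).ne_empty⟩, ?_⟩
        · rintro x (rfl | rfl)
          · exact hSVI hy0S
          · exact hSVI hzS
        · intro P hP hP2
          have hfin : ({y0, z} : Set Vr).Finite := (Set.finite_singleton z).insert y0
          have hPT : P = ({y0, z} : Set Vr) :=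
            Set.eq_of_subset_of_ncard_le hP (by rw [Set.ncard_pair hy0z, hP2]) hfin
          refine ⟨U1, ?_, ?_⟩
          · rw [key d1 h1]; exact ⟨hU1, hU1S⟩
          · rw [hPT]
            rintro x (rfl | rfl)
            · exact hy0U1
            · exact hzU1
      have m2 : ({y0, z} : Set Vr) ∉
          (rhoPS VI (aunifyRT VI d2 (zs.map fun w =>
            (w, constT (Sig := Sig) (ar := ar) a ha)))).sh := by
        intro hT
        obtain ⟨U, hU, hTU⟩ := hT.2 {y0, z} subset_rfl (Set.ncard_pair hy0z)
        rw [key d2 h2] at hU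
        exact hpair2 ⟨U, hU.1, hTU (Set.mem_insert _ _),
          hTU (Set.mem_insert_of_mem _ rfl), hU.2⟩
      intro h
      exact m2 (h ▸ m1)
    · -- groundness distinguishes {z}
      have hz1 : ∃ U, U ∈ d1.sh ∧ z ∈ U ∧ U ⊆ S := by
        have hz' : z ∈ ⋃₀ {U | U ∈ d1.sh ∧ z ∈ U ∧ U ⊆ S} := (hcov z hzS) ▸ hzS
        obtain ⟨U, hU, hzU⟩ := hz'
        exact ⟨U, hU.1, hzU, hU.2.2⟩
      obtain ⟨U1, hU1, hzU1, hU1S⟩ := hz1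
      refine ⟨rhoCon VI, by simp, ?_⟩
      have m1 : ({z} : Set Vr) ∈
          (rhoCon VI (aunifyRT VI d1 (zs.map fun w =>
            (w, constT (Sig := Sig) (ar := ar) a ha)))).sh := by
        refine ⟨⟨Set.singleton_subset_iff.2 (hSVI hzS),
          (Set.singleton_nonempty z).ne_empty⟩, ?_⟩
        rintro x rfl
        refine ⟨U1, ?_, hzU1⟩
        rw [key d1 h1]; exact ⟨hU1, hU1S⟩
      have m2 : ({z} : Set Vr) ∉
          (rhoCon VI (aunifyRT VI d2 (zs.map fun w =>
            (w, constT (Sig := Sig) (ar := ar) a ha)))).sh := by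
        intro hT
        obtain ⟨U, hU, hzU⟩ := hT.2 rfl
        rw [key d2 h2] at hU
        exact hz2 ⟨U, hU.1, hzU, hU.2⟩
      intro h
      exact m2 (h ▸ m1)

end RhoPSDMin

/-- Minimality: if `ρ_PSD(d1) ≠ ρ_PSD(d2)` then some sequence
of bindings and some observable among `ρ_Con`, `ρ_PS`, `ρ_F`, `ρ_L`
distinguishes `d1` from `d2` after abstract unification. -/
theorem rhoPSD_minimality
    {Sig Vr : Type} {ar : Sig → ℕ}
    (_hSig : ∃ a b : Sig, a ≠ b ∧ ar a = 0)
    (VI : Set Vr) (_hVI : VI.Finite)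
    (d1 d2 : SFLElem Vr) (_h1 : d1.WF VI) (_h2 : d2.WF VI)
    (_hne : rhoPSD VI d1 ≠ rhoPSD VI d2) :
    ∃ bs : List (Vr × HTerm Sig ar Vr),
      (∀ b ∈ bs, insert b.1 b.2.vars ⊆ VI ∧ b.2 ≠ HTerm.var b.1) ∧
      ∃ ρ ∈ ({rhoCon VI, rhoPS VI, rhoF VI, rhoL VI} :
          Set (SFLElem Vr → SFLElem Vr)),
        ρ (aunifyRT VI d1 bs) ≠ ρ (aunifyRT VI d2 bs) := by
  obtain ⟨a, -, -, ha⟩ := _hSig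
  by_cases hf : d1.f = d2.f
  · by_cases hl : d1.l = d2.l
    · -- the sharing components of the closures differ
      have hsh : rhoPSDsh VI d1.sh ≠ rhoPSDsh VI d2.sh := by
        intro h
        exact _hne (by simp only [rhoPSD, h, hf, hl])
      have hex : ∃ S, (S ∈ rhoPSDsh VI d1.sh ∧ S ∉ rhoPSDsh VI d2.sh) ∨
          (S ∈ rhoPSDsh VI d2.sh ∧ S ∉ rhoPSDsh VI d1.sh) := by
        by_contra h
        push_neg at h
        apply hsh
        ext S
        have := h S
        tauto
      obtain ⟨S, hS | hS⟩ := hex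
      · exact RhoPSDMin.core a ha VI _hVI d1 d2 _h1 _h2 S hS.1 hS.2
      · obtain ⟨bs, hbs, ρ, hρ, hne⟩ :=
          RhoPSDMin.core a ha VI _hVI d2 d1 _h2 _h1 S hS.1 hS.2
        exact ⟨bs, hbs, ρ, hρ, hne.symm⟩
    · -- linearity differs
      refine ⟨[], by simp, rhoL VI, by simp, ?_⟩
      intro h
      simp only [aunifyRT] at h
      have := congrArg SFLElem.l h
      simp only [rhoL] at this
      exact hl this
  · -- freeness differs
    refine ⟨[], by simp, rhoF VI, by simp, ?_⟩
    intro h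
    simp only [aunifyRT] at h
    have := congrArg SFLElem.f h
    simp only [rhoF] at this
    exact hf this
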